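/- For every 2 ≤ k ≤ K: P̄_k|h_k|² ≤ η̃_k if and only if P̄_k|h_k|² ≤ η̃_{k−1}; and P̄_k|h_k|² ≥ η̃_k if and only if P̄_k|h_k|² ≥ η̃_{k−1}. (Lemma 4) -/
import Mathlib

lemma sq_le_sq_iff_aux {a b : ℝ} (ha : 0 ≤ a) (hb : 0 ≤ b) :
    a ^ 2 ≤ b ^ 2 ↔ a ≤ b := by
  constructor
  · intro H
    nlinarith
  · intro H
    nlinarith

/-- **Lemma 4.** For every `2 ≤ k ≤ K`:
`P̄_k|h_k|² ≤ η̃_k ↔ P̄_k|h_k|² ≤ η̃_{k−1}` and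
`P̄_k|h_k|² ≥ η̃_k ↔ P̄_k|h_k|² ≥ η̃_{k−1}`. -/
theorem stmt5
    (K : ℕ) (hK : 1 ≤ K) (P h : ℕ → ℝ) (σ2 : ℝ)
    (hP : ∀ k, 1 ≤ k → k ≤ K → 0 < P k)
    (hh : ∀ k, 1 ≤ k → k ≤ K → 0 < h k)
    (hσ2 : 0 < σ2)
    (hord : ∀ k, 1 ≤ k → k < K → P k * (h k) ^ 2 ≤ P (k + 1) * (h (k + 1)) ^ 2)
    (S ηt : ℕ → ℝ)
    (hS : ∀ k, S k = ∑ i ∈ Finset.Icc 1 k, Real.sqrt (P i) * h i)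
    (hηt : ∀ k, ηt k = ((σ2 + ∑ i ∈ Finset.Icc 1 k, P i * (h i) ^ 2) / S k) ^ 2) :
    ∀ k, 2 ≤ k → k ≤ K →
      ((P k * (h k) ^ 2 ≤ ηt k ↔ P k * (h k) ^ 2 ≤ ηt (k - 1)) ∧
       (ηt k ≤ P k * (h k) ^ 2 ↔ ηt (k - 1) ≤ P k * (h k) ^ 2)) := by
  intro k hk2 hkK
  obtain ⟨m, rfl⟩ : ∃ m, k = m + 1 := ⟨k - 1, by omega⟩
  have hm1 : 1 ≤ m := by omega
  simp only [Nat.add_sub_cancel]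
  set a := Real.sqrt (P (m+1)) * h (m+1) with ha
  have hPk : 0 < P (m+1) := hP _ (by omega) hkK
  have hhk : 0 < h (m+1) := hh _ (by omega) hkK
  have ha0 : 0 < a := mul_pos (Real.sqrt_pos.2 hPk) hhk
  have ha2 : a ^ 2 = P (m+1) * h (m+1) ^ 2 := by
    rw [ha, mul_pow, Real.sq_sqrt hPk.le]
  have hB : 0 < S m := by
    rw [hS]
    apply Finset.sum_pos
    · intro i hi
      rw [Finset.mem_Icc] at hi
      exact mul_pos (Real.sqrt_pos.2 (hP i hi.1 (by omega))) (hh i hi.1 (by omega))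
    · exact ⟨1, Finset.mem_Icc.2 ⟨le_refl 1, hm1⟩⟩
  set A := σ2 + ∑ i ∈ Finset.Icc 1 m, P i * h i ^ 2 with hA
  have hA0 : 0 < A := by
    apply add_pos_of_pos_of_nonneg hσ2
    apply Finset.sum_nonneg
    intro i hi
    rw [Finset.mem_Icc] at hi
    exact (mul_pos (hP i hi.1 (by omega)) (pow_pos (hh i hi.1 (by omega)) 2)).le
  have hSk : S (m+1) = S m + a := by
    rw [hS, hS, Finset.sum_Icc_succ_top (by omega : 1 ≤ m + 1)]
  have hD : 0 < S m + a := by positivity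
  have hηk : ηt (m+1) = ((A + a^2) / (S m + a)) ^ 2 := by
    rw [hηt, hSk, Finset.sum_Icc_succ_top (by omega : 1 ≤ m + 1), ha2, hA]
    ring
  have hηm : ηt m = (A / S m) ^ 2 := by rw [hηt, hA]
  have hX : (0:ℝ) ≤ (A + a^2) / (S m + a) := by positivity
  have hY : (0:ℝ) ≤ A / S m := by positivity
  have key1 : P (m+1) * h (m+1) ^ 2 ≤ ηt (m+1) ↔ a * S m ≤ A := by
    rw [hηk, ← ha2, sq_le_sq_iff_aux ha0.le hX, le_div_iff₀ hD]
    constructor <;> intro H <;> nlinarith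
  have key2 : P (m+1) * h (m+1) ^ 2 ≤ ηt m ↔ a * S m ≤ A := by
    rw [hηm, ← ha2, sq_le_sq_iff_aux ha0.le hY, le_div_iff₀ hB]
  have key3 : ηt (m+1) ≤ P (m+1) * h (m+1) ^ 2 ↔ A ≤ a * S m := by
    rw [hηk, ← ha2, sq_le_sq_iff_aux hX ha0.le, div_le_iff₀ hD]
    constructor <;> intro H <;> nlinarith
  have key4 : ηt m ≤ P (m+1) * h (m+1) ^ 2 ↔ A ≤ a * S m := by
    rw [hηm, ← ha2, sq_le_sq_iff_aux hY ha0.le, div_le_iff₀ hB]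
  exact ⟨key1.trans key2.symm, key3.trans key4.symm⟩
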